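/- Under the proximal gradient update of the multi-objective method, each objective is monotonically non-increasing: if Θ^{(t+1)} minimizes φ_ℓ(·; Θ^{(t)}) with ℓ > L, then F_k(Θ^{(t+1)}) ≤ F_k(Θ^{(t)}) for every k = 1,…,M. -/

import Mathlib

open Matrix
open scoped NNReal

attribute [local instance] Matrix.frobeniusNormedAddCommGroup Matrix.frobeniusNormedSpace

/-- Descent lemma: if `f` is differentiable with `L`-Lipschitz gradient, then
`f y ≤ f x + f'(x)(y-x) + L/2 ‖y-x‖²`. -/
lemma descent_lemma {E : Type*} [NormedAddCommGroup E] [NormedSpace ℝ E]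
    {f : E → ℝ} {L : ℝ≥0} (hf : Differentiable ℝ f)
    (hlip : LipschitzWith L (fderiv ℝ f)) (x y : E) :
    f y ≤ f x + fderiv ℝ f x (y - x) + (L : ℝ) / 2 * ‖y - x‖ ^ 2 := by
  set v := y - x with hv
  have hpath : ∀ t : ℝ, HasDerivAt (fun t : ℝ => x + t • v) v t := by
    intro t
    simpa using ((hasDerivAt_id t).smul_const v).const_add x
  have hh : ∀ t : ℝ, HasDerivAt (fun t => f (x + t • v))
      (fderiv ℝ f (x + t • v) v) t := fun t =>
    ((hf (x + t • v)).hasFDerivAt).comp_hasDerivAt t (hpath t)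
  have hcont : Continuous fun t : ℝ => fderiv ℝ f (x + t • v) v := by
    have : Continuous fun t : ℝ => x + t • v := by continuity
    exact (hlip.continuous.comp this).clm_apply continuous_const
  have hFTC : f (x + (1:ℝ) • v) - f (x + (0:ℝ) • v)
      = ∫ t in (0:ℝ)..1, fderiv ℝ f (x + t • v) v :=
    (intervalIntegral.integral_eq_sub_of_hasDerivAt
      (fun t _ => hh t) (hcont.intervalIntegrable 0 1)).symm
  have hbound : ∀ t ∈ Set.Icc (0:ℝ) 1,
      fderiv ℝ f (x + t • v) v ≤ fderiv ℝ f x v + (L : ℝ) * ‖v‖ ^ 2 * t := by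
    intro t ht
    have h1 : fderiv ℝ f (x + t • v) v - fderiv ℝ f x v
        = (fderiv ℝ f (x + t • v) - fderiv ℝ f x) v := by simp
    have h2 : (fderiv ℝ f (x + t • v) - fderiv ℝ f x) v
        ≤ ‖fderiv ℝ f (x + t • v) - fderiv ℝ f x‖ * ‖v‖ :=
      le_trans (le_abs_self _) ((fderiv ℝ f (x + t • v) - fderiv ℝ f x).le_opNorm v)
    have h3 : ‖fderiv ℝ f (x + t • v) - fderiv ℝ f x‖ ≤ (L : ℝ) * (t * ‖v‖) := by
      have := hlip.dist_le_mul (x + t • v) x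
      rw [dist_eq_norm] at this
      simpa [dist_eq_norm, norm_smul, abs_of_nonneg ht.1, mul_comm] using this
    nlinarith [norm_nonneg v, ht.1]
  have hInt : ∫ t in (0:ℝ)..1, fderiv ℝ f (x + t • v) v
      ≤ ∫ t in (0:ℝ)..1, (fderiv ℝ f x v + (L : ℝ) * ‖v‖ ^ 2 * t) := by
    apply intervalIntegral.integral_mono_on (by norm_num)
      (hcont.intervalIntegrable 0 1)
      ((by continuity : Continuous fun t : ℝ => fderiv ℝ f x v + (L:ℝ) * ‖v‖^2 * t).intervalIntegrable 0 1)
    exact hbound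
  have hval : ∫ t in (0:ℝ)..1, (fderiv ℝ f x v + (L : ℝ) * ‖v‖ ^ 2 * t)
      = fderiv ℝ f x v + (L : ℝ) / 2 * ‖v‖ ^ 2 := by
    rw [intervalIntegral.integral_add (intervalIntegrable_const)
      ((intervalIntegral.intervalIntegrable_id).const_mul _),
      intervalIntegral.integral_const, intervalIntegral.integral_const_mul,
      integral_id]
    simp
    ring
  have key : f (x + (1:ℝ) • v) - f (x + (0:ℝ) • v)
      ≤ fderiv ℝ f x v + (L : ℝ) / 2 * ‖v‖ ^ 2 := hFTC ▸ hInt.trans hval.le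
  have e1 : x + (1:ℝ) • v = y := by simp [hv]
  have e0 : x + (0:ℝ) • v = x := by simp
  rw [e1, e0] at key
  linarith

/-- Monotone decrease of each objective under the multi-objective proximal
gradient update: if `Θ'` minimizes `φ_ℓ(·; Θ)` over the convex set `M` with `ℓ > L`, where
`φ_ℓ(Φ;Θ) = max_k ⟨∇f_k(Θ), Φ-Θ⟩ + g(Φ) - g(Θ) + (ℓ/2)‖Φ-Θ‖_F²`, then
`F_k(Θ') ≤ F_k(Θ)` for every `k`, where `F_k = f_k + g`. -/
theorem prox_update_monotone_decrease
    (P M : ℕ)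
    (f : Fin M → Matrix (Fin P) (Fin P) ℝ → ℝ) (g : Matrix (Fin P) (Fin P) ℝ → ℝ)
    (Mset : Set (Matrix (Fin P) (Fin P) ℝ)) (hMconv : Convex ℝ Mset)
    (hg : ConvexOn ℝ Set.univ g)
    (L : ℝ≥0) (hf : ∀ k, Differentiable ℝ (f k))
    (hlip : ∀ k, @LipschitzWith _ _ _ (ContinuousLinearMap.toSeminormedAddCommGroup :
      SeminormedAddCommGroup (Matrix (Fin P) (Fin P) ℝ →L[ℝ] ℝ)).toPseudoEMetricSpace L (fderiv ℝ (f k)))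
    (ℓ : ℝ) (hℓ : (L : ℝ) < ℓ)
    (Θ Θ' : Matrix (Fin P) (Fin P) ℝ) (hΘ : Θ ∈ Mset) (hΘ' : Θ' ∈ Mset)
    (hmin : ∀ Φ ∈ Mset,
      (⨆ k : Fin M, fderiv ℝ (f k) Θ (Θ' - Θ)) + g Θ' - g Θ + ℓ/2 * ‖Θ' - Θ‖^2 ≤
      (⨆ k : Fin M, fderiv ℝ (f k) Θ (Φ - Θ)) + g Φ - g Θ + ℓ/2 * ‖Φ - Θ‖^2) :
    ∀ k : Fin M, f k Θ' + g Θ' ≤ f k Θ + g Θ := by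
  intro k
  have hne : Nonempty (Fin M) := ⟨k⟩
  have hmin0 := hmin Θ hΘ
  have h0 : (⨆ j : Fin M, fderiv ℝ (f j) Θ (Θ - Θ)) = 0 := by
    simp
  rw [h0] at hmin0
  simp only [sub_self, norm_zero] at hmin0
  have hsup : fderiv ℝ (f k) Θ (Θ' - Θ) ≤ ⨆ j : Fin M, fderiv ℝ (f j) Θ (Θ' - Θ) :=
    le_ciSup (f := fun j : Fin M => fderiv ℝ (f j) Θ (Θ' - Θ)) (Set.Finite.bddAbove (Set.finite_range _)) k
  have hdesc : f k Θ' ≤ f k Θ + fderiv ℝ (f k) Θ (Θ' - Θ) + (L : ℝ) / 2 * ‖Θ' - Θ‖ ^ 2 :=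
    descent_lemma (hf k) (hlip k) Θ Θ'
  nlinarith [sq_nonneg ‖Θ' - Θ‖, hmin0, hsup, hdesc, hℓ]
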